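/- Let 𝓕 ⊆ P(ℕ×ℕ) be upward closed with ℕ×{j} ⊆* F for every F ∈ 𝓕 and every j ∈ ℕ, and suppose that for every sequence (K_j)_{j∈ℕ} of finite subsets of ℕ there exists a finite subfamily 𝓐 ⊆ 𝓕 with (⋂𝓐) ∩ ⋃_{j∈ℕ}(K_j×{j}) = ∅. Then X = {χ_{(ℕ×ℕ)\F} : F ∈ 𝓕} is a subset of the group G and X generates G, i.e. every element of G is a finite sum of elements of X. -/

import Mathlib

open Set Filter Topology

/-- The group `G ≤ {0,1}^(ℕ×ℕ)`. -/
def Gset : Set ((ℕ × ℕ) → ZMod 2) :=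
  {x | ∀ j : ℕ, {i : ℕ | x (i, j) ≠ 0}.Finite}

/-- `g` is a finite sum of elements of `X`. -/
def IsFiniteSumOf (X : Set ((ℕ × ℕ) → ZMod 2)) (g : (ℕ × ℕ) → ZMod 2) : Prop :=
  ∃ l : List ((ℕ × ℕ) → ZMod 2), (∀ a ∈ l, a ∈ X) ∧ l.sum = g

/-- `X` generates the group `G` : every element of `G` is a finite sum of elements of `X`. -/
def GeneratesG (X : Set ((ℕ × ℕ) → ZMod 2)) : Prop :=
  ∀ g ∈ Gset, IsFiniteSumOf X g

/-- The characteristic function of `A ⊆ ℕ × ℕ` with values in `ZMod 2`. -/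
noncomputable def chiZ (A : Set (ℕ × ℕ)) : (ℕ × ℕ) → ZMod 2 :=
  open Classical in fun p => if p ∈ A then 1 else 0

lemma chiZ_split (S A : Set (ℕ × ℕ)) :
    chiZ S = chiZ (S ∩ Aᶜ) + chiZ (S ∩ A) := by
  funext p
  by_cases hS : p ∈ S <;> by_cases hA : p ∈ A <;>
    simp [chiZ, hS, hA, Pi.add_apply]

lemma sum_lemma (𝓕 : Set (Set (ℕ × ℕ)))
    (hup : ∀ A ∈ 𝓕, ∀ B : Set (ℕ × ℕ), A ⊆ B → B ∈ 𝓕) :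
    ∀ (l : List (Set (ℕ × ℕ))), (∀ A ∈ l, A ∈ 𝓕) →
    ∀ S : Set (ℕ × ℕ), S ∩ ⋂₀ {A | A ∈ l} = ∅ →
      IsFiniteSumOf ((fun F => chiZ Fᶜ) '' 𝓕) (chiZ S) := by
  intro l
  induction l with
  | nil =>
    intro _ S hS
    have hSe : S = ∅ := by simpa using hS
    exact ⟨[], by simp, by subst hSe; funext p; simp [chiZ]⟩
  | cons A t ih =>
    intro hmem S hS
    have hdisj : (S ∩ A) ∩ ⋂₀ {B | B ∈ t} = ∅ := by
      rw [Set.eq_empty_iff_forall_notMem] at hS ⊢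
      intro p hp
      rcases hp with ⟨⟨hpS, hpA⟩, hpT⟩
      refine hS p ⟨hpS, ?_⟩
      intro B hB
      rcases List.mem_cons.1 hB with rfl | hB'
      · exact hpA
      · exact hpT B hB'
    obtain ⟨L, hL, hLsum⟩ := ih (fun B hB => hmem B (List.mem_cons_of_mem _ hB)) (S ∩ A) hdisj
    refine ⟨chiZ (S ∩ Aᶜ) :: L, ?_, ?_⟩
    · intro a ha
      rcases List.mem_cons.1 ha with rfl | ha
      · refine ⟨(S ∩ Aᶜ)ᶜ, hup A (hmem A List.mem_cons_self) _ ?_, by simp⟩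
        intro p hp
        simp only [Set.mem_compl_iff, Set.mem_inter_iff, not_and, Set.not_notMem]
        intro _; exact hp
      · exact hL a ha
    · rw [List.sum_cons, hLsum, ← chiZ_split]

theorem stmt_6 (𝓕 : Set (Set (ℕ × ℕ)))
    (hup : ∀ A ∈ 𝓕, ∀ B : Set (ℕ × ℕ), A ⊆ B → B ∈ 𝓕)
    (hcof : ∀ F ∈ 𝓕, ∀ j : ℕ, {i : ℕ | (i, j) ∉ F}.Finite)
    (h : ∀ K : ℕ → Finset ℕ, ∃ 𝓐 : Finset (Set (ℕ × ℕ)), ↑𝓐 ⊆ 𝓕 ∧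
      ⋂₀ (𝓐 : Set (Set (ℕ × ℕ))) ∩ {p : ℕ × ℕ | p.1 ∈ K p.2} = ∅) :
    (fun F => chiZ Fᶜ) '' 𝓕 ⊆ Gset ∧ GeneratesG ((fun F => chiZ Fᶜ) '' 𝓕) := by
  constructor
  · rintro x ⟨F, hF, rfl⟩ j
    apply (hcof F hF j).subset
    intro i hi
    simp only [Set.mem_setOf_eq, chiZ] at hi ⊢
    intro hFi
    exact hi (by simp [hFi])
  · intro g hg
    set K : ℕ → Finset ℕ := fun j => (hg j).toFinset with hK
    obtain ⟨𝓐, h𝓐, hinter⟩ := h K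
    have hSeq : {p : ℕ × ℕ | g p ≠ 0} = {p : ℕ × ℕ | p.1 ∈ K p.2} := by
      ext p
      simp [hK, Set.Finite.mem_toFinset]
    have hgchi : g = chiZ {p : ℕ × ℕ | g p ≠ 0} := by
      funext p
      by_cases hp : g p = 0
      · simp [chiZ, hp]
      · have key : ∀ a : ZMod 2, a ≠ 0 → a = 1 := by decide
        have h1 : g p = 1 := key _ hp
        simp [chiZ, hp, h1]
    rw [hgchi]
    apply sum_lemma 𝓕 hup 𝓐.toList
    · intro A hA
      exact h𝓐 (by simpa using hA)
    · rw [hSeq]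
      rw [Set.eq_empty_iff_forall_notMem] at hinter ⊢
      intro p hp
      refine hinter p ⟨?_, hp.1⟩
      intro A hA
      exact hp.2 A (by simpa using hA)
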